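/- For every C* > 0 there exists a constant C > 0, depending only on C*, with the following property. Let κ = conv{x,y,z} ⊂ ℝ³ be a C*-regular triangle with unit normal n̄(κ), let N : ℝ³ → ℝ³ be an affine map with linear part L, let D = L∘P with P the orthogonal projection of ℝ³ onto span{y−x, z−x}, and let m₁ = (x+y)/2 and m₂ = (y+z)/2 be the midpoints of the edges [x,y] and [y,z]. Assume |N(m₁)| = |N(m₂)| = 1, N(m₁)·(y−x) = 0, N(m₂)·(z−y) = 0, and N(m₁)·n̄(κ) ≥ 0. Then |N(m₁) − n̄(κ)| ≤ C·diam(κ)·‖D‖, where ‖D‖ is the operator norm. (This is the paper's Lemma 'normal estimate' stating that any unit edge director of a regular triangular complex is close to the actual triangle normal.) -/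

import Mathlib

open scoped RealInnerProductSpace

noncomputable section

/-- Euclidean 3-space. -/
abbrev E3 := EuclideanSpace ℝ (Fin 3)

/-- The cross product on `ℝ³`. -/
def cross3 (u v : E3) : E3 :=
  (WithLp.equiv 2 (Fin 3 → ℝ)).symm
    ![u 1 * v 2 - u 2 * v 1, u 2 * v 0 - u 0 * v 2, u 0 * v 1 - u 1 * v 0]

/-- The diameter of the triangle `conv{x,y,z}`. -/
def diam3 (x y z : E3) : ℝ := max ‖y - x‖ (max ‖z - x‖ ‖z - y‖)

/-- The area of the triangle `conv{x,y,z}`. -/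
def area3 (x y z : E3) : ℝ := ‖cross3 (y - x) (z - x)‖ / 2

/-- The unit normal `n̄(κ)` of the triangle `κ = conv{x,y,z}`. -/
def unitNormal (x y z : E3) : E3 :=
  ‖cross3 (y - x) (z - x)‖⁻¹ • cross3 (y - x) (z - x)

/-- The orthogonal projection of `ℝ³` onto the tangent plane `span{y−x, z−x}`
of the triangle `conv{x,y,z}`, as a map `ℝ³ → ℝ³`. -/
def tangentProj (x y z : E3) : E3 →L[ℝ] E3 :=
  (Submodule.span ℝ {y - x, z - x}).subtypeL ∘L
    Submodule.orthogonalProjection (Submodule.span ℝ {y - x, z - x})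

/-- The tangentially projected linear part `D = L∘P` of an affine map `N` with
linear part `L`, relative to the triangle `conv{x,y,z}`. -/
def tangGrad (N : E3 →ᵃ[ℝ] E3) (x y z : E3) : E3 →L[ℝ] E3 :=
  (LinearMap.toContinuousLinearMap N.linear) ∘L tangentProj x y z

lemma inner3 (a b : E3) : ⟪a,b⟫ = a 0 * b 0 + a 1 * b 1 + a 2 * b 2 := by
  simp [PiLp.inner_apply, Fin.sum_univ_three, RCLike.inner_apply, mul_comm]

lemma cross3_apply (u v : E3) (i : Fin 3) :
    cross3 u v i =
      ![u 1 * v 2 - u 2 * v 1, u 2 * v 0 - u 0 * v 2, u 0 * v 1 - u 1 * v 0] i := by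
  simp [cross3]

/-- Lagrange-type identity for the cross product, specialized to `⟪w,u⟫ = 0`. -/
lemma key3 (u v w : E3) (h : ⟪w,u⟫ = 0) :
    ‖w‖^2 * ‖cross3 u v‖^2 = ⟪w, cross3 u v⟫^2 + ⟪w,v⟫^2 * ‖u‖^2 := by
  simp only [← real_inner_self_eq_norm_sq]
  simp only [inner3, cross3_apply] at *
  simp only [Matrix.cons_val_zero, Matrix.cons_val_one, Matrix.head_cons,
    Matrix.cons_val_two, Matrix.tail_cons]
  linear_combination ((w 0 * u 0 + w 1 * u 1 + w 2 * u 2) * (v 0 * v 0 + v 1 * v 1 + v 2 * v 2)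
    - 2 * (w 0 * v 0 + w 1 * v 1 + w 2 * v 2) * (u 0 * v 0 + u 1 * v 1 + u 2 * v 2)) * h

lemma endgame (Cstar d Dn s e : ℝ) (hC : 0 < Cstar) (hd : 0 < d) (hDn : 0 ≤ Dn)
    (hs0 : 0 ≤ s) (hs1 : s ≤ 1)
    (h1s2 : (1 - s^2) * (2*Cstar*d^2)^2 ≤ (Dn*d^2/2)^2 * d^2)
    (he : e^2 = 2 - 2*s) (he0 : 0 ≤ e) :
    e ≤ Cstar⁻¹ * d * Dn := by
  have hrhs : 0 ≤ Cstar⁻¹ * d * Dn := by positivity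
  have hsq : e^2 ≤ (Cstar⁻¹ * d * Dn)^2 := by
    have h3 : 2 - 2*s ≤ 2*(1 - s^2) := by nlinarith
    have hd4 : (0:ℝ) < d^4 := by positivity
    have hA : (2 - 2*s) * Cstar^2 * d^4 ≤ Dn^2 * d^2 * d^4 := by
      nlinarith [mul_le_mul_of_nonneg_right h3 (by positivity : (0:ℝ) ≤ Cstar^2*d^4),
        h1s2, sq_nonneg (Dn*d^3)]
    have h4 : (Cstar⁻¹ * d * Dn)^2 = Dn^2 * d^2 / Cstar^2 := by field_simp
    rw [he, h4, le_div_iff₀ (by positivity : (0:ℝ) < Cstar^2)]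
    exact le_of_mul_le_mul_right (by nlinarith [hA] :
      (2 - 2*s) * Cstar^2 * d^4 ≤ Dn^2 * d^2 * d^4) hd4
  nlinarith [hsq, hrhs, he0]

set_option maxHeartbeats 1000000 in
/-- any unit edge director of a regular triangle is close to the
triangle normal, with error `C·diam(κ)·‖D‖`. -/
theorem stmt_0 (Cstar : ℝ) (hCstar : 0 < Cstar) :
    ∃ C > (0 : ℝ), ∀ (x y z : E3) (N : E3 →ᵃ[ℝ] E3),
      ¬ Collinear ℝ ({x, y, z} : Set E3) →
      Cstar * diam3 x y z ^ 2 ≤ area3 x y z →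
      ‖N (midpoint ℝ x y)‖ = 1 →
      ‖N (midpoint ℝ y z)‖ = 1 →
      ⟪N (midpoint ℝ x y), y - x⟫ = 0 →
      ⟪N (midpoint ℝ y z), z - y⟫ = 0 →
      0 ≤ ⟪N (midpoint ℝ x y), unitNormal x y z⟫ →
      ‖N (midpoint ℝ x y) - unitNormal x y z‖ ≤
        C * diam3 x y z * ‖tangGrad N x y z‖ := by
  refine ⟨Cstar⁻¹, inv_pos.mpr hCstar, fun x y z N hcol hreg hw1 hn1 hwu hnv hs ↦ ?_⟩
  set w : E3 := N (midpoint ℝ x y) with hw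
  set n₂ : E3 := N (midpoint ℝ y z) with hn₂
  set c : E3 := cross3 (y - x) (z - x) with hc
  set d : ℝ := diam3 x y z with hd
  set Dn : ℝ := ‖tangGrad N x y z‖ with hDn
  have hDn0 : 0 ≤ Dn := norm_nonneg _
  -- d > 0
  have hxy : x ≠ y := by
    rintro rfl
    exact hcol (by simpa using collinear_pair ℝ x z)
  have hd0 : 0 < d := by
    have : (0:ℝ) < ‖y - x‖ := by
      simpa [sub_eq_zero] using (norm_pos_iff.mpr (sub_ne_zero.mpr (Ne.symm hxy)))
    exact lt_of_lt_of_le this (le_max_left _ _)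
  -- ‖c‖ ≥ 2 C* d²
  have hcnorm : 2 * Cstar * d ^ 2 ≤ ‖c‖ := by
    have : Cstar * d ^ 2 ≤ ‖c‖ / 2 := hreg
    linarith
  have hc0 : 0 < ‖c‖ := lt_of_lt_of_le (by positivity) hcnorm
  -- the difference of the two directors is controlled by Dn
  have hmem : (2:ℝ)⁻¹ • (z - x) ∈ Submodule.span ℝ ({y - x, z - x} : Set E3) :=
    Submodule.smul_mem _ _ (Submodule.subset_span (by simp))
  have hp : tangentProj x y z ((2:ℝ)⁻¹ • (z - x)) = (2:ℝ)⁻¹ • (z - x) := by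
    simp only [tangentProj, ContinuousLinearMap.comp_apply, Submodule.subtypeL_apply]
    exact Submodule.starProjection_eq_self_iff.mpr hmem
  have htg : tangGrad N x y z ((2:ℝ)⁻¹ • (z - x)) = N.linear ((2:ℝ)⁻¹ • (z - x)) := by
    simp only [tangGrad, ContinuousLinearMap.comp_apply, hp,
      LinearMap.coe_toContinuousLinearMap']
  have hdiff : n₂ - w = N.linear ((2:ℝ)⁻¹ • (z - x)) := by
    have h := N.linearMap_vsub (midpoint ℝ y z) (midpoint ℝ x y)
    rw [vsub_eq_sub, vsub_eq_sub] at h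
    rw [hn₂, hw, ← h]
    congr 1
    rw [midpoint_eq_smul_add, midpoint_eq_smul_add, invOf_eq_inv, ← smul_sub]
    congr 1
    abel
  have hdz : ‖z - x‖ ≤ d := le_trans (le_max_left _ _) (le_max_right _ _)
  have hzy : ‖z - y‖ ≤ d := le_trans (le_max_right _ _) (le_max_right _ _)
  have hnd : ‖n₂ - w‖ ≤ Dn * d / 2 := by
    rw [hdiff, ← htg]
    calc ‖tangGrad N x y z ((2:ℝ)⁻¹ • (z - x))‖
        ≤ Dn * ‖(2:ℝ)⁻¹ • (z - x)‖ := (tangGrad N x y z).le_opNorm _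
      _ ≤ Dn * d / 2 := by
          rw [norm_smul]
          simp only [norm_inv, Real.norm_ofNat]
          nlinarith
  -- bound on the tangential component ⟪w, z - x⟫
  have hwv : |⟪w, z - x⟫| ≤ Dn * d ^ 2 / 2 := by
    have h1 : ⟪w, z - x⟫ = ⟪w - n₂, z - y⟫ := by
      have : (z : E3) - x = (z - y) + (y - x) := by abel
      rw [this, inner_add_right, hwu, add_zero, inner_sub_left, hnv, sub_zero]
    rw [h1]
    calc |⟪w - n₂, z - y⟫| ≤ ‖w - n₂‖ * ‖z - y‖ := abs_real_inner_le_norm _ _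
      _ ≤ (Dn * d / 2) * d := by
          have : ‖w - n₂‖ = ‖n₂ - w‖ := by rw [norm_sub_rev]
          apply mul_le_mul (this ▸ hnd) hzy (norm_nonneg _) (div_nonneg (mul_nonneg hDn0 hd0.le) (by norm_num))
      _ = Dn * d ^ 2 / 2 := by ring
  -- key identity
  have hkey := key3 (y - x) (z - x) w hwu
  rw [hw1, one_pow, one_mul] at hkey
  -- the inner product with the unit normal
  have hsn : ⟪w, unitNormal x y z⟫ = ‖c‖⁻¹ * ⟪w, c⟫ := by
    rw [unitNormal, real_inner_smul_right]
  set s : ℝ := ⟪w, unitNormal x y z⟫ with hs'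
  have hsc : s * ‖c‖ = ⟪w, c⟫ := by
    rw [hsn]; field_simp
  have hnn : ‖unitNormal x y z‖ = 1 := by
    rw [unitNormal, norm_smul, norm_inv, norm_norm, inv_mul_cancel₀ (ne_of_gt hc0)]
  have hs1 : s ≤ 1 := by
    calc s ≤ ‖w‖ * ‖unitNormal x y z‖ := real_inner_le_norm _ _
      _ = 1 := by rw [hw1, hnn, one_mul]
  -- ‖w - n̄‖² = 2 - 2 s
  have hns : ‖w - unitNormal x y z‖ ^ 2 = 2 - 2 * s := by
    rw [norm_sub_sq_real, hw1, hnn, ← hs']; ring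
  -- 1 - s² = ⟪w, z-x⟫² ‖y-x‖² / ‖c‖²
  have hid : (1 - s ^ 2) * ‖c‖ ^ 2 = ⟪w, z - x⟫ ^ 2 * ‖y - x‖ ^ 2 := by
    have : ⟪w, c⟫ ^ 2 = s ^ 2 * ‖c‖ ^ 2 := by rw [← hsc]; ring
    rw [← hc] at hkey
    linear_combination hkey + this
  -- numerical assembly
  have hu : ‖y - x‖ ≤ d := le_max_left _ _
  have hwv2 : ⟪w, z - x⟫ ^ 2 ≤ (Dn * d ^ 2 / 2) ^ 2 := by
    rw [← sq_abs]
    exact pow_le_pow_left₀ (abs_nonneg _) hwv 2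
  have hu2 : ‖y - x‖ ^ 2 ≤ d ^ 2 := pow_le_pow_left₀ (norm_nonneg _) hu 2
  have hc2 : (2 * Cstar * d ^ 2) ^ 2 ≤ ‖c‖ ^ 2 := pow_le_pow_left₀ (by positivity) hcnorm 2
  have h1s2 : (1 - s ^ 2) * (2 * Cstar * d ^ 2) ^ 2 ≤ (Dn * d ^ 2 / 2) ^ 2 * d ^ 2 := by
    have hs2 : 1 - s ^ 2 ≥ 0 := by nlinarith [hs, hs1]
    calc (1 - s ^ 2) * (2 * Cstar * d ^ 2) ^ 2 ≤ (1 - s ^ 2) * ‖c‖ ^ 2 := by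
          apply mul_le_mul_of_nonneg_left hc2 hs2
      _ = ⟪w, z - x⟫ ^ 2 * ‖y - x‖ ^ 2 := hid
      _ ≤ (Dn * d ^ 2 / 2) ^ 2 * d ^ 2 := by
          apply mul_le_mul hwv2 hu2 (sq_nonneg _) (sq_nonneg _)
  exact endgame Cstar d Dn s ‖w - unitNormal x y z‖ hCstar hd0 hDn0 hs hs1 h1s2 hns
    (norm_nonneg _)
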